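/- arXiv:2403.08467 — 6 statements merged into one kernel-verified Lean document; each statement's English description precedes it below -/
import Mathlib

section
/- Let ν > 2 and λ > 2 be real numbers. A pair (x, α) ∈ ℝ² satisfies the deformation system α(λ-4) = -α(2 + 2νx - ν) - 8(1-x) and λ - 1 = -5 - 2νx + ν + 4x + ((2-λ)/2)α if and only if there exists s ∈ {1, -1} such that x = 1/2 - (νλ + s·√(2λν(ν+λ-2)))/(2ν(ν-2)) and α = -2(2ν - s·√(2λν(ν+λ-2)))/(ν(λ-2)). -/
/-- For real ν > 2 and λ > 2, a pair (x, α) satisfies the spherical-harmonic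
deformation system iff it is given by the explicit formulas with sign s ∈ {1, -1}. -/
theorem deformation_system_solution (ν lam x α : ℝ) (hν : 2 < ν) (hlam : 2 < lam) :
    (α * (lam - 4) = -α * (2 + 2 * ν * x - ν) - 8 * (1 - x) ∧
      lam - 1 = -5 - 2 * ν * x + ν + 4 * x + ((2 - lam) / 2) * α) ↔
    ∃ s : ℝ, (s = 1 ∨ s = -1) ∧
      x = 1 / 2 - (ν * lam + s * Real.sqrt (2 * lam * ν * (ν + lam - 2))) / (2 * ν * (ν - 2)) ∧
      α = -2 * (2 * ν - s * Real.sqrt (2 * lam * ν * (ν + lam - 2))) / (ν * (lam - 2)) := by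
  have hν0 : ν ≠ 0 := by linarith
  have hν2 : ν - 2 ≠ 0 := by intro h; linarith
  have hl2 : lam - 2 ≠ 0 := by intro h; linarith
  set Q := Real.sqrt (2 * lam * ν * (ν + lam - 2)) with hQdef
  have hR : 0 < 2 * lam * ν * (ν + lam - 2) :=
    mul_pos (mul_pos (by linarith) (by linarith)) (by linarith)
  have hQ2 : Q ^ 2 = 2 * lam * ν * (ν + lam - 2) := Real.sq_sqrt hR.le
  have hQpos : 0 < Q := Real.sqrt_pos.mpr hR
  have hQ0 : Q ≠ 0 := ne_of_gt hQpos
  clear_value Q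
  constructor
  · rintro ⟨h1, h2⟩
    have hα : α = -2 * (lam + 4 - ν + 2 * ν * x - 4 * x) / (lam - 2) := by
      field_simp
      linarith
    have hE : (ν ^ 2 - 2 * ν - ν * lam - 2 * ν * (ν - 2) * x) ^ 2 = Q ^ 2 := by
      rw [hQ2]
      rw [hα] at h1
      field_simp at h1
      nlinarith [h1]
    set E := ν ^ 2 - 2 * ν - ν * lam - 2 * ν * (ν - 2) * x with hEdef
    refine ⟨E / Q, ?_, ?_, ?_⟩
    · have hs2 : (E / Q) * (E / Q) = 1 := by
        field_simp
        linear_combination hE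
      exact mul_self_eq_one_iff.mp hs2
    · field_simp
      linear_combination hEdef
    · rw [hα]
      field_simp
      linear_combination -hEdef
  · rintro ⟨s, hs, hx, hα⟩
    have hs2 : s ^ 2 = 1 := by rcases hs with h | h <;> rw [h] <;> norm_num
    subst hx hα
    constructor
    · field_simp
      linear_combination (-4*Q^2) * hs2 + (-4) * hQ2
    · field_simp
      ring
end

section
/- Let x be a real number with 0 < x ≤ 1 and let l ≥ 2 be an integer, and set λ = l(l+1). Then there is no real number α satisfying both α(λ-4) = -4xα - 8(1-x) and λ - 1 = -3 + ((2-λ)/2)α. -/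
/-- For 0 < x ≤ 1 and integer l ≥ 2 with λ = l(l+1), the first-order deformation
system has no solution α. -/
theorem first_order_no_nontrivial_deformation (x : ℝ) (hx0 : 0 < x) (hx1 : x ≤ 1)
    (l : ℤ) (hl : 2 ≤ l) (lam : ℝ) (hlam : lam = (l : ℝ) * ((l : ℝ) + 1)) :
    ¬ ∃ α : ℝ, α * (lam - 4) = -4 * x * α - 8 * (1 - x) ∧
      lam - 1 = -3 + ((2 - lam) / 2) * α := by
  rintro ⟨α, h1, h2⟩
  have hl2 : (2 : ℝ) ≤ (l : ℝ) := by exact_mod_cast hl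
  have hlam6 : (6 : ℝ) ≤ lam := by nlinarith
  have h3 : (2 - lam) * α = 2 * (lam + 2) := by linarith
  have h5 : α * (lam - 4) + 4 * x * α = -8 * (1 - x) := by linarith
  have h4 : (2 * (lam + 2)) * (lam - 4 + 4 * x) = (-8 * (1 - x)) * (2 - lam) := by
    calc (2 * (lam + 2)) * (lam - 4 + 4 * x) = ((2 - lam) * α) * (lam - 4 + 4 * x) := by
          rw [h3]
      _ = (2 - lam) * (α * (lam - 4) + 4 * x * α) := by ring
      _ = (2 - lam) * (-8 * (1 - x)) := by rw [h5]
      _ = (-8 * (1 - x)) * (2 - lam) := by ring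
  nlinarith [mul_pos (by linarith : (0:ℝ) < lam) (by linarith : (0:ℝ) < lam - 6 + 8 * x)]
end

section
/- Every element of the set E is strictly less than 1/2; in particular 1/2 ∉ E, and every real x ≥ 1/2 lies outside E. -/
/-- The set of exceptional values `E_ν` for a real parameter ν. -/
def exceptionalSet (ν : ℝ) : Set ℝ :=
  { x | (∃ l : ℤ, 1 ≤ l ∧ ∃ s : ℝ, (s = 1 ∨ s = -1) ∧
      x = 1 / 2 - (ν * ((l : ℝ) * ((l : ℝ) + 1)) +
        s * Real.sqrt (2 * ((l : ℝ) * ((l : ℝ) + 1)) * ν *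
          (ν + (l : ℝ) * ((l : ℝ) + 1) - 2))) / (2 * ν * (ν - 2))) ∧
    x ≠ 1 / 2 }

/-- The union `E = ⋃_{n ≥ 2} E_{n(n+1)}`. -/
def exceptionalUnion : Set ℝ :=
  ⋃ n ∈ { n : ℤ | 2 ≤ n }, exceptionalSet ((n : ℝ) * ((n : ℝ) + 1))

/-- Every element of E is strictly less than 1/2; in particular 1/2 ∉ E, and every
real x ≥ 1/2 lies outside E. -/
theorem exceptionalUnion_lt_half :
    (∀ x ∈ exceptionalUnion, x < 1 / 2) ∧
    (1 / 2 : ℝ) ∉ exceptionalUnion ∧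
    ∀ x : ℝ, 1 / 2 ≤ x → x ∉ exceptionalUnion := by
  have main : ∀ x ∈ exceptionalUnion, x < 1 / 2 := by
    intro x hx
    rw [exceptionalUnion, Set.mem_iUnion₂] at hx
    obtain ⟨n, hn, ⟨l, hl, s, hs, hxe⟩, hne⟩ := hx
    have hn' : (2 : ℝ) ≤ (n : ℝ) := by exact_mod_cast hn
    have hl' : (1 : ℝ) ≤ (l : ℝ) := by exact_mod_cast hl
    set ν : ℝ := (n : ℝ) * ((n : ℝ) + 1) with hνdef
    set lam : ℝ := (l : ℝ) * ((l : ℝ) + 1) with hlamdef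
    have hν : (6 : ℝ) ≤ ν := by nlinarith
    have hlam : (2 : ℝ) ≤ lam := by nlinarith
    set A : ℝ := Real.sqrt (2 * lam * ν * (ν + lam - 2)) with hA
    have hA0 : 0 ≤ A := Real.sqrt_nonneg _
    have hden : 0 < 2 * ν * (ν - 2) := by nlinarith
    have hAle : A ≤ ν * lam := by
      have h1 : 2 * lam * ν * (ν + lam - 2) ≤ (ν * lam) ^ 2 := by
        nlinarith [mul_nonneg (mul_nonneg (by nlinarith : (0:ℝ) ≤ ν * lam)
          (by linarith : (0:ℝ) ≤ ν - 2)) (by linarith : (0:ℝ) ≤ lam - 2)]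
      calc A ≤ Real.sqrt ((ν * lam) ^ 2) := Real.sqrt_le_sqrt h1
        _ = ν * lam := by
            rw [Real.sqrt_sq (by nlinarith)]
    have hnum : 0 ≤ ν * lam + s * A := by
      rcases hs with h | h <;> subst h <;> nlinarith
    have hle : x ≤ 1 / 2 := by
      rw [hxe]
      have := div_nonneg hnum hden.le
      linarith
    exact lt_of_le_of_ne hle hne
  exact ⟨main, fun h => absurd (main _ h) (lt_irrefl _),
    fun x hx hm => absurd (main _ hm) (not_lt.mpr hx)⟩
end

section
/- The supremum of the set E equals 1/2. Concretely, the numbers x_n = (n(n+1) - 6)/(2(n(n+1) - 2)) belong to E for every integer n ≥ 3, satisfy x_n < 1/2, and converge to 1/2 as n → ∞. -/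
lemma aux_lt (n : ℤ) (hn : 3 ≤ n) :
    ((n : ℝ) * ((n : ℝ) + 1) - 6) / (2 * ((n : ℝ) * ((n : ℝ) + 1) - 2)) < 1 / 2 := by
  have hn' : (3 : ℝ) ≤ (n : ℝ) := by exact_mod_cast hn
  have hν : (12 : ℝ) ≤ (n : ℝ) * ((n : ℝ) + 1) := by nlinarith
  rw [div_lt_div_iff₀ (by nlinarith) (by norm_num)]
  nlinarith

lemma aux_mem (n : ℤ) (hn : 3 ≤ n) :
    ((n : ℝ) * ((n : ℝ) + 1) - 6) / (2 * ((n : ℝ) * ((n : ℝ) + 1) - 2)) ∈ exceptionalUnion := by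
  have hn' : (3 : ℝ) ≤ (n : ℝ) := by exact_mod_cast hn
  set ν : ℝ := (n : ℝ) * ((n : ℝ) + 1) with hνdef
  have hν : (12 : ℝ) ≤ ν := by nlinarith
  clear_value ν
  refine Set.mem_biUnion (show n ∈ {n : ℤ | 2 ≤ n} from by simp; omega) ?_
  rw [← hνdef]
  constructor
  · refine ⟨1, le_refl _, 1, Or.inl rfl, ?_⟩
    push_cast
    have hs : (2 : ℝ) * (1 * (1 + 1)) * ν * (ν + 1 * (1 + 1) - 2) = (2 * ν) ^ 2 := by ring
    rw [hs, Real.sqrt_sq (by nlinarith)]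
    have h0 : ν ≠ 0 := by nlinarith
    have h2 : ν - 2 ≠ 0 := by nlinarith
    field_simp
    ring
  · rw [hνdef]; exact ne_of_lt (aux_lt n hn)

lemma aux_ub : ∀ x ∈ exceptionalUnion, x ≤ 1 / 2 := by
  intro x hx
  obtain ⟨n, hn, hx⟩ := Set.mem_iUnion₂.mp hx
  obtain ⟨⟨l, hl, s, hs, hxe⟩, -⟩ := hx
  have hn' : (2 : ℝ) ≤ (n : ℝ) := by exact_mod_cast hn
  have hl' : (1 : ℝ) ≤ (l : ℝ) := by exact_mod_cast hl
  set ν : ℝ := (n : ℝ) * ((n : ℝ) + 1) with hνdef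
  set L : ℝ := (l : ℝ) * ((l : ℝ) + 1) with hLdef
  have hν : (6 : ℝ) ≤ ν := by nlinarith
  have hL : (2 : ℝ) ≤ L := by nlinarith
  have hsq : Real.sqrt (2 * L * ν * (ν + L - 2)) ≤ ν * L := by
    have h1 : 2 * L * ν * (ν + L - 2) ≤ (ν * L) ^ 2 := by
      nlinarith [mul_nonneg (mul_nonneg (show (0:ℝ) ≤ ν * L by nlinarith)
        (show (0:ℝ) ≤ ν - 2 by linarith)) (show (0:ℝ) ≤ L - 2 by linarith)]
    calc Real.sqrt (2 * L * ν * (ν + L - 2)) ≤ Real.sqrt ((ν * L) ^ 2) :=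
          Real.sqrt_le_sqrt h1
      _ = ν * L := Real.sqrt_sq (by nlinarith)
  have hnonneg : 0 ≤ ν * L + s * Real.sqrt (2 * L * ν * (ν + L - 2)) := by
    rcases hs with rfl | rfl
    · have := Real.sqrt_nonneg (2 * L * ν * (ν + L - 2)); nlinarith
    · nlinarith
  have hden : 0 < 2 * ν * (ν - 2) := by nlinarith
  rw [hxe]
  have := div_nonneg hnonneg (le_of_lt hden)
  linarith

lemma aux_tendsto :
    Filter.Tendsto
      (fun n : ℕ => (((n : ℝ) * ((n : ℝ) + 1) - 6) / (2 * ((n : ℝ) * ((n : ℝ) + 1) - 2))))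
      Filter.atTop (nhds (1 / 2)) := by
  have h1 : Filter.Tendsto (fun n : ℕ => (n : ℝ) * ((n : ℝ) + 1) - 2)
      Filter.atTop Filter.atTop := by
    apply Filter.tendsto_atTop_mono (f := fun n : ℕ => (n : ℝ) + (-2))
    · intro n
      have : (0 : ℝ) ≤ (n : ℝ) := Nat.cast_nonneg n
      nlinarith
    · exact Filter.tendsto_atTop_add_const_right _ (-2) tendsto_natCast_atTop_atTop
  have h2 : Filter.Tendsto (fun n : ℕ => ((n : ℝ) * ((n : ℝ) + 1) - 2)⁻¹)
      Filter.atTop (nhds 0) := h1.inv_tendsto_atTop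
  have h3 : Filter.Tendsto (fun n : ℕ => 1 / 2 - 2 * ((n : ℝ) * ((n : ℝ) + 1) - 2)⁻¹)
      Filter.atTop (nhds (1 / 2)) := by
    have := ((h2.const_mul (2 : ℝ)).const_sub (1 / 2 : ℝ))
    simpa using this
  refine h3.congr' ?_
  filter_upwards [Filter.eventually_atTop.mpr ⟨2, fun n hn => hn⟩] with n hn
  have hn' : (2 : ℝ) ≤ (n : ℝ) := by exact_mod_cast hn
  have hpos : (0 : ℝ) < (n : ℝ) * ((n : ℝ) + 1) - 2 := by nlinarith
  field_simp
  ring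

/-- The supremum of E is 1/2: the values xₙ = (n(n+1)-6)/(2(n(n+1)-2)) lie in E for
all integers n ≥ 3, are strictly less than 1/2, and converge to 1/2. -/
theorem exceptionalUnion_sSup_eq_half :
    sSup exceptionalUnion = 1 / 2 ∧
    (∀ n : ℤ, 3 ≤ n →
      (((n : ℝ) * ((n : ℝ) + 1) - 6) / (2 * ((n : ℝ) * ((n : ℝ) + 1) - 2)) ∈ exceptionalUnion ∧
        ((n : ℝ) * ((n : ℝ) + 1) - 6) / (2 * ((n : ℝ) * ((n : ℝ) + 1) - 2)) < 1 / 2)) ∧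
    Filter.Tendsto
      (fun n : ℕ => (((n : ℝ) * ((n : ℝ) + 1) - 6) / (2 * ((n : ℝ) * ((n : ℝ) + 1) - 2))))
      Filter.atTop (nhds (1 / 2)) := by
  have hbdd : BddAbove exceptionalUnion := ⟨1 / 2, aux_ub⟩
  have hne : exceptionalUnion.Nonempty := ⟨_, aux_mem 3 le_rfl⟩
  refine ⟨?_, fun n hn => ⟨aux_mem n hn, aux_lt n hn⟩, aux_tendsto⟩
  apply le_antisymm (csSup_le hne aux_ub)
  refine le_of_tendsto aux_tendsto ?_
  filter_upwards [Filter.eventually_atTop.mpr ⟨3, fun n hn => hn⟩] with n hn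
  have : ((n : ℤ) : ℝ) = (n : ℝ) := by push_cast; rfl
  have hmem := aux_mem (n : ℤ) (by exact_mod_cast hn)
  rw [this] at hmem
  exact le_csSup hbdd hmem
end

section
/- Let Λ > 0 and r₀ > 0 with Λr₀² < 1, take the extremal parameters m = 2r₀(1 - 2Λr₀²/3) and Q² = r₀²(1 - Λr₀²), and let Φ(r) = 1 - m/r - Λr²/3 + Q²/r². Then r_c := -r₀ + √(3/Λ - 2r₀²) satisfies r_c > 0 and Φ(r_c) = 0, and moreover r_c > r₀ if and only if Λr₀² < 1/2, r_c = r₀ if and only if Λr₀² = 1/2, and r_c < r₀ if and only if Λr₀² > 1/2. -/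
set_option maxHeartbeats 1000000 in
/-- For Λ > 0, r₀ > 0 with Λr₀² < 1 and extremal parameters, the remaining horizon
radius r_c = -r₀ + √(3/Λ - 2r₀²) is a positive zero of Φ, and r_c ≷ r₀ according to
whether Λr₀² ≶ 1/2. -/
theorem extremal_RNdS_third_horizon (Λ r₀ : ℝ) (hΛ : 0 < Λ) (hr₀ : 0 < r₀)
    (h1 : Λ * r₀ ^ 2 < 1) (m Q : ℝ)
    (hm : m = 2 * r₀ * (1 - 2 * Λ * r₀ ^ 2 / 3))
    (hQ : Q ^ 2 = r₀ ^ 2 * (1 - Λ * r₀ ^ 2))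
    (rc : ℝ) (hrc : rc = -r₀ + Real.sqrt (3 / Λ - 2 * r₀ ^ 2)) :
    0 < rc ∧
    (1 - m / rc - Λ * rc ^ 2 / 3 + Q ^ 2 / rc ^ 2 = 0) ∧
    (r₀ < rc ↔ Λ * r₀ ^ 2 < 1 / 2) ∧
    (rc = r₀ ↔ Λ * r₀ ^ 2 = 1 / 2) ∧
    (rc < r₀ ↔ 1 / 2 < Λ * r₀ ^ 2) := by
  have hΛne : Λ ≠ 0 := ne_of_gt hΛ
  set s := Real.sqrt (3 / Λ - 2 * r₀ ^ 2) with hs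
  have harg : (0:ℝ) ≤ 3 / Λ - 2 * r₀ ^ 2 := by
    rw [le_sub_iff_add_le, zero_add, le_div_iff₀ hΛ]; nlinarith
  have hs2 : s ^ 2 = 3 / Λ - 2 * r₀ ^ 2 := Real.sq_sqrt harg
  have hs2' : Λ * s ^ 2 = 3 - 2 * Λ * r₀ ^ 2 := by rw [hs2]; field_simp
  clear_value s
  have hr0s : r₀ < s := by
    rw [hs]
    refine (Real.lt_sqrt hr₀.le).2 ?_
    rw [lt_sub_iff_add_lt, lt_div_iff₀ hΛ]
    nlinarith
  have hrcpos : 0 < rc := by rw [hrc]; linarith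
  have hrcne : rc ≠ 0 := ne_of_gt hrcpos
  refine ⟨hrcpos, ?_, ?_, ?_, ?_⟩
  · have key : rc ^ 2 - m * rc - Λ * rc ^ 4 / 3 + Q ^ 2 = 0 := by
      rw [hrc, hm, hQ]
      linear_combination (-(1 / 3) * s ^ 2 + (4 * r₀ / 3) * s - 4 * r₀ ^ 2 / 3) * hs2'
    have expand : 1 - m / rc - Λ * rc ^ 2 / 3 + Q ^ 2 / rc ^ 2
        = (rc ^ 2 - m * rc - Λ * rc ^ 4 / 3 + Q ^ 2) / rc ^ 2 := by
      field_simp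
    rw [expand, key, zero_div]
  · constructor
    · intro h
      have h2 : 2 * r₀ < s := by rw [hrc] at h; linarith
      have h3 : (2 * r₀) ^ 2 < s ^ 2 := by nlinarith
      rw [hs2] at h3
      have h4 : 6 * r₀ ^ 2 < 3 / Λ := by nlinarith
      rw [lt_div_iff₀ hΛ] at h4
      nlinarith
    · intro h
      have h4 : (2 * r₀) ^ 2 < 3 / Λ - 2 * r₀ ^ 2 := by
        rw [lt_sub_iff_add_lt, lt_div_iff₀ hΛ]
        nlinarith
      have := (Real.lt_sqrt (by positivity)).2 h4
      rw [hrc]; linarith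
  · constructor
    · intro h
      have h2 : s = 2 * r₀ := by rw [hrc] at h; linarith
      have h3 : 3 / Λ - 2 * r₀ ^ 2 = 4 * r₀ ^ 2 := by rw [← hs2, h2]; ring
      have h4 : 3 / Λ = 6 * r₀ ^ 2 := by linarith
      rw [div_eq_iff hΛne] at h4
      nlinarith
    · intro h
      have harg' : 3 / Λ - 2 * r₀ ^ 2 = (2 * r₀) ^ 2 := by
        have h3 : 3 / Λ = 6 * r₀ ^ 2 := by
          rw [div_eq_iff hΛne]; nlinarith
        rw [h3]; ring
      rw [hrc, hs, harg', Real.sqrt_sq (by positivity)]; ring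
  · constructor
    · intro h
      have h2 : s < 2 * r₀ := by rw [hrc] at h; linarith
      have h3 : s ^ 2 < (2 * r₀) ^ 2 := by
        have hs0 : 0 ≤ s := by linarith
        nlinarith [mul_self_nonneg (2 * r₀ - s)]
      rw [hs2] at h3
      have h4 : 3 / Λ < 6 * r₀ ^ 2 := by linarith
      rw [div_lt_iff₀ hΛ] at h4
      nlinarith [h4]
    · intro h
      have h4 : 3 / Λ - 2 * r₀ ^ 2 < (2 * r₀) ^ 2 := by
        rw [sub_lt_iff_lt_add, div_lt_iff₀ hΛ]; nlinarith
      have := (Real.sqrt_lt' (by positivity)).2 h4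
      rw [hrc]; linarith
end

section
/- Let Λ ∈ ℝ, r₀ > 0 and C ≠ 0, and define φ(ρ) = -(4/(C²r₀²))·[1 - 2(1 - 2Λr₀²/3)/(1 + Cρ/2) - (Λr₀²/3)(1 + Cρ/2)² + (1 - Λr₀²)/(1 + Cρ/2)²] on a neighbourhood of 0 where 1 + Cρ/2 ≠ 0. Then φ(0) = 0, φ'(0) = 0, and for every natural number k the (k+2)-nd iterated derivative of φ at 0 equals (1/r₀²)·[(2Λr₀²/3)·δ_{0k} - (1 - Λr₀²)(k+3)! + 2(1 - 2Λr₀²/3)(k+2)!]·(-C/2)^k, where δ_{0k} is 1 if k = 0 and 0 otherwise. -/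
open Filter Topology

namespace PhiAux

noncomputable def q (C : ℝ) : ℕ → ℝ → ℝ
  | 0, ρ => (1 + C * ρ / 2) ^ 2
  | 1, ρ => C * (1 + C * ρ / 2)
  | 2, _ => C ^ 2 / 2
  | _+3, _ => 0

noncomputable def G (a b d e C : ℝ) (n : ℕ) (ρ : ℝ) : ℝ :=
  a * ((if n = 0 then 1 else 0)
    - b * (-C/2)^n * (n.factorial : ℝ) / (1 + C*ρ/2)^(n+1)
    - e * q C n ρ
    + d * (-C/2)^n * ((n+1).factorial : ℝ) / (1 + C*ρ/2)^(n+2))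

lemma hu (C ρ : ℝ) : HasDerivAt (fun x : ℝ => 1 + C * x / 2) (C/2) ρ := by
  simpa using (((hasDerivAt_id ρ).const_mul C).div_const 2).const_add 1

lemma q_hasDerivAt (C : ℝ) (n : ℕ) (ρ : ℝ) :
    HasDerivAt (fun x => q C n x) (q C (n+1) ρ) ρ := by
  match n with
  | 0 =>
    have h := (hu C ρ).fun_pow 2
    simp only [q]
    refine h.congr_deriv ?_
    ring
  | 1 =>
    have h := (hu C ρ).const_mul C
    simp only [q]
    refine h.congr_deriv ?_
    ring
  | 2 => simpa [q] using hasDerivAt_const ρ (C^2/2)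
  | (m+3) => simpa [q] using hasDerivAt_const ρ (0:ℝ)

lemma G_hasDerivAt (a b d e C : ℝ) (n : ℕ) (ρ : ℝ) (h : 1 + C*ρ/2 ≠ 0) :
    HasDerivAt (G a b d e C n) (G a b d e C (n+1) ρ) ρ := by
  have h1 : HasDerivAt (fun x => b * (-C/2)^n * (n.factorial : ℝ) / (1 + C*x/2)^(n+1))
      (b * (-C/2)^(n+1) * ((n+1).factorial : ℝ) / (1 + C*ρ/2)^(n+2)) ρ := by
    have hp := (hu C ρ).fun_pow (n+1)
    have := (hasDerivAt_const ρ (b * (-C/2)^n * (n.factorial : ℝ))).fun_div hp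
      (pow_ne_zero _ h)
    refine this.congr_deriv ?_
    rw [← pow_mul, div_eq_div_iff (pow_ne_zero _ h) (pow_ne_zero _ h)]
    push_cast [Nat.factorial_succ]
    ring
  have h2 : HasDerivAt (fun x => d * (-C/2)^n * ((n+1).factorial : ℝ) / (1 + C*x/2)^(n+2))
      (d * (-C/2)^(n+1) * ((n+2).factorial : ℝ) / (1 + C*ρ/2)^(n+3)) ρ := by
    have hp := (hu C ρ).fun_pow (n+2)
    have := (hasDerivAt_const ρ (d * (-C/2)^n * ((n+1).factorial : ℝ))).fun_div hp
      (pow_ne_zero _ h)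
    refine this.congr_deriv ?_
    rw [← pow_mul, div_eq_div_iff (pow_ne_zero _ h) (pow_ne_zero _ h)]
    push_cast [Nat.factorial_succ]
    ring
  have h0 : HasDerivAt (fun _ : ℝ => (if n = 0 then (1:ℝ) else 0)) 0 ρ :=
    hasDerivAt_const _ _
  have hq := (q_hasDerivAt C n ρ).const_mul e
  have := (((h0.fun_sub h1).fun_sub hq).fun_add h2).const_mul a
  simp only [G]
  refine this.congr_deriv ?_
  rw [if_neg (by omega : n + 1 ≠ 0)]

lemma iterated (a b d e C : ℝ) (n : ℕ) :
    ∀ ρ : ℝ, 1 + C*ρ/2 ≠ 0 →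
    iteratedDeriv n (fun x => a * (1 - b/(1+C*x/2) - e*(1+C*x/2)^2 + d/(1+C*x/2)^2)) ρ
      = G a b d e C n ρ := by
  induction n with
  | zero =>
    intro ρ h
    simp [G, q]
  | succ n ih =>
    intro ρ h
    rw [iteratedDeriv_succ]
    have hcont : ContinuousAt (fun x : ℝ => 1 + C*x/2) ρ := by fun_prop
    have hev : ∀ᶠ x in 𝓝 ρ, 1 + C*x/2 ≠ 0 := hcont.eventually_ne h
    have heq : (iteratedDeriv n (fun x => a * (1 - b/(1+C*x/2) - e*(1+C*x/2)^2 + d/(1+C*x/2)^2)))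
        =ᶠ[𝓝 ρ] G a b d e C n := hev.mono fun x hx => ih x hx
    rw [heq.deriv_eq]
    exact (G_hasDerivAt a b d e C n ρ h).deriv

end PhiAux

/-- The metric component φ of the candidate solution vanishes to second order at
ρ = 0, and its (k+2)-nd derivative at 0 matches the extremal RN–dS transverse
deformation data. -/
theorem phi_taylor_coefficients (Λ r₀ C : ℝ) (hr₀ : 0 < r₀) (hC : C ≠ 0) :
    let φ : ℝ → ℝ := fun ρ =>
      -(4 / (C ^ 2 * r₀ ^ 2)) *
        (1 - 2 * (1 - 2 * Λ * r₀ ^ 2 / 3) / (1 + C * ρ / 2)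
          - (Λ * r₀ ^ 2 / 3) * (1 + C * ρ / 2) ^ 2
          + (1 - Λ * r₀ ^ 2) / (1 + C * ρ / 2) ^ 2)
    φ 0 = 0 ∧ deriv φ 0 = 0 ∧
    ∀ k : ℕ, iteratedDeriv (k + 2) φ 0 =
      (1 / r₀ ^ 2) *
        ((2 * Λ * r₀ ^ 2 / 3) * (if k = 0 then 1 else 0)
          - (1 - Λ * r₀ ^ 2) * (Nat.factorial (k + 3))
          + 2 * (1 - 2 * Λ * r₀ ^ 2 / 3) * (Nat.factorial (k + 2))) * (-C / 2) ^ k := by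
  intro φ
  have h0 : (1:ℝ) + C*0/2 ≠ 0 := by norm_num
  have key := PhiAux.iterated (-(4 / (C ^ 2 * r₀ ^ 2))) (2 * (1 - 2 * Λ * r₀ ^ 2 / 3))
      (1 - Λ * r₀ ^ 2) (Λ * r₀ ^ 2 / 3) C
  have hr : r₀ ≠ 0 := hr₀.ne'
  refine ⟨?_, ?_, ?_⟩
  · have := key 0 0 h0
    rw [iteratedDeriv_zero] at this
    rw [show φ 0 = PhiAux.G (-(4 / (C ^ 2 * r₀ ^ 2))) (2 * (1 - 2 * Λ * r₀ ^ 2 / 3))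
        (1 - Λ * r₀ ^ 2) (Λ * r₀ ^ 2 / 3) C 0 0 from this]
    simp [PhiAux.G, PhiAux.q]
    exact Or.inr (by ring)
  · have := key 1 0 h0
    rw [iteratedDeriv_one] at this
    rw [show deriv φ 0 = PhiAux.G (-(4 / (C ^ 2 * r₀ ^ 2))) (2 * (1 - 2 * Λ * r₀ ^ 2 / 3))
        (1 - Λ * r₀ ^ 2) (Λ * r₀ ^ 2 / 3) C 1 0 from this]
    simp [PhiAux.G, PhiAux.q, Nat.factorial]
    exact Or.inr (by ring)
  · intro k
    have := key (k+2) 0 h0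
    rw [show iteratedDeriv (k+2) φ 0 = PhiAux.G (-(4 / (C ^ 2 * r₀ ^ 2)))
        (2 * (1 - 2 * Λ * r₀ ^ 2 / 3)) (1 - Λ * r₀ ^ 2) (Λ * r₀ ^ 2 / 3) C (k+2) 0 from this]
    rcases k with _ | k
    · simp [PhiAux.G, PhiAux.q, Nat.factorial]
      field_simp
      ring
    · simp [PhiAux.G, PhiAux.q, Nat.factorial_succ]
      field_simp
      ring
end
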